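/- Let $k=\mathbb{F}_{2^m}$ with $m$ odd and $a\in k^*$. Then $x^5+a^{-1}$ factors over $k$ as the product of a linear factor and an irreducible quartic factor. -/

import Mathlib

open Polynomial

lemma aux_five_not_dvd (n : ℕ) (h4 : ¬ 4 ∣ n) : ¬ (5 ∣ 2 ^ n - 1) := by
  intro h
  apply h4
  have h1 : (1:ℕ) ≤ 2 ^ n := Nat.one_le_two_pow
  have hpow : ((2:ZMod 5)) ^ n = 1 := by
    have hc : ((2 ^ n - 1 : ℕ) : ZMod 5) = 0 :=
      (ZMod.natCast_eq_zero_iff _ _).2 h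
    rw [Nat.cast_sub h1] at hc
    push_cast at hc
    linear_combination hc
  have hmod : (2:ZMod 5) ^ n = 2 ^ (n % 4) := by
    conv_lhs => rw [← Nat.div_add_mod n 4]
    rw [pow_add, pow_mul]
    norm_num
    rw [show ((16:ZMod 5)) = 1 by decide, one_pow, one_mul]
  rw [hmod] at hpow
  apply Nat.dvd_of_mod_eq_zero
  have hlt : n % 4 < 4 := Nat.mod_lt _ (by norm_num)
  interval_cases h : n % 4 <;> first | rfl | (revert hpow; decide)

theorem stmt_17 (k : Type*) [Field k] [Fintype k] [CharP k 2]
    (m : ℕ) (hm : Odd m) (hq : Fintype.card k = 2 ^ m)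
    (a : k) (ha : a ≠ 0) :
    ∃ z : k, ∃ g : k[X], g.Monic ∧ g.degree = 4 ∧ Irreducible g ∧
      (X ^ 5 + C a⁻¹ : k[X]) = (X + C z) * g := by
  have h2k : (2:k) = 0 := by exact_mod_cast CharP.cast_eq_zero k 2
  -- fifth root z of a⁻¹
  have hm4 : ¬ (4 ∣ m) := fun h => (Nat.not_even_iff_odd.mpr hm)
    ((even_iff_two_dvd).mpr (dvd_trans (by norm_num) h))
  have hcop : Nat.Coprime (Nat.card kˣ) 5 := by
    rw [Nat.card_units, Nat.card_eq_fintype_card, hq]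
    exact Nat.coprime_comm.mp
      ((Nat.Prime.coprime_iff_not_dvd (by norm_num)).mpr (aux_five_not_dvd m hm4))
  set uA : kˣ := Units.mk0 a⁻¹ (inv_ne_zero ha) with huA
  set zu : kˣ := (powCoprime (n := 5) hcop).symm uA with hzu
  have hz5u : zu ^ 5 = uA := by
    have := (powCoprime (n := 5) hcop).apply_symm_apply uA
    rwa [powCoprime_apply] at this
  set z : k := (zu : k) with hzdef
  have hz5 : z ^ 5 = a⁻¹ := by
    have := congrArg Units.val hz5u
    simpa [Units.val_pow_eq_pow_val, hzdef, huA] using this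
  have hz0 : z ≠ 0 := zu.ne_zero
  set g : k[X] := X^4 + C z * X^3 + C z ^ 2 * X^2 + C z ^ 3 * X + C z ^ 4 with hgdef
  have hmonic : g.Monic := by unfold g; monicity!
  have hdeg : g.degree = 4 := by unfold g; compute_degree!
  have hnat : g.natDegree = 4 := natDegree_eq_of_degree_eq_some hdeg
  have h2P : (2 : k[X]) = 0 := by
    rw [← map_ofNat (C : k →+* k[X]) 2, h2k, map_zero]
  have hid : (X ^ 5 + C a⁻¹ : k[X]) = (X + C z) * g := by
    rw [← hz5, map_pow, hgdef]
    linear_combination (-(C z * X^4) - (C z)^2 * X^3 - (C z)^3 * X^2 - (C z)^4 * X) * h2P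
  have hevalz : g.eval z = z ^ 4 := by
    simp only [hgdef, eval_add, eval_mul, eval_pow, eval_X, eval_C]
    linear_combination (2 * z^4) * h2k
  refine ⟨z, g, hmonic, hdeg, ?_, hid⟩
  by_contra hirr
  -- find an irreducible factor of degree ≤ 2
  have hg0 : g ≠ 0 := hmonic.ne_zero
  have hfac : ∃ r : k[X], Irreducible r ∧ r ∣ g ∧ r.natDegree ≤ 2 := by
    have hnotunit : ¬ IsUnit g := by
      intro hu
      have := natDegree_eq_zero_of_isUnit hu
      omega
    rw [irreducible_iff] at hirr
    push_neg at hirr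
    obtain ⟨p, q, hpq, hpu, hqu⟩ := hirr hnotunit
    have hp0 : p ≠ 0 := fun h => hg0 (by rw [hpq, h, zero_mul])
    have hq0 : q ≠ 0 := fun h => hg0 (by rw [hpq, h, mul_zero])
    have hsum : p.natDegree + q.natDegree = 4 := by
      rw [← natDegree_mul hp0 hq0, ← hpq, hnat]
    rcases le_or_gt p.natDegree 2 with h | h
    · obtain ⟨r, hr, hrp⟩ := WfDvdMonoid.exists_irreducible_factor hpu hp0
      exact ⟨r, hr, hrp.trans ⟨q, hpq⟩,
        (natDegree_le_of_dvd hrp hp0).trans h⟩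
    · obtain ⟨r, hr, hrq⟩ := WfDvdMonoid.exists_irreducible_factor hqu hq0
      exact ⟨r, hr, hrq.trans ⟨p, by rw [hpq]; ring⟩,
        (natDegree_le_of_dvd hrq hq0).trans (by omega)⟩
  obtain ⟨r, hrirr, hrdvd, hrle⟩ := hfac
  have hr0 : r ≠ 0 := hrirr.ne_zero
  have hrpos : 0 < r.natDegree := hrirr.natDegree_pos
  haveI := Fact.mk hrirr
  set K := AdjoinRoot r with hK
  letI : Fintype K := Module.fintypeOfFintype (AdjoinRoot.powerBasis hr0).basis
  have hcardK : Fintype.card K = 2 ^ (m * r.natDegree) := by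
    rw [Module.card_fintype (AdjoinRoot.powerBasis hr0).basis, hq]
    rw [show Fintype.card (Fin (AdjoinRoot.powerBasis hr0).dim) = r.natDegree by
      simp [AdjoinRoot.powerBasis]; exact (Fintype.card_congr (Equiv.refl _)).trans (Fintype.card_fin _)]
    rw [← pow_mul]
  have h5K : ¬ (5 ∣ Fintype.card K - 1) := by
    rw [hcardK]
    apply aux_five_not_dvd
    intro h4
    interval_cases hd : r.natDegree
    · obtain ⟨c, hc⟩ := h4
      obtain ⟨c', hc'⟩ := hm
      omega
    · obtain ⟨c, hc⟩ := h4
      obtain ⟨c', hc'⟩ := hm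
      omega
  haveI : CharP K 2 := charP_of_injective_algebraMap (algebraMap k K).injective 2
  set φ := algebraMap k K with hφ
  set α := AdjoinRoot.root r with hα
  have hαg : aeval α g = 0 := by
    obtain ⟨s, hs⟩ := hrdvd
    have hr00 : aeval α r = 0 := by rw [AdjoinRoot.aeval_eq, AdjoinRoot.mk_self]
    rw [hs, map_mul, hr00, zero_mul]
  have hφz : φ z ≠ 0 := fun h => hz0 ((algebraMap k K).injective (by simpa using h))
  have hα5 : α ^ 5 = (φ z) ^ 5 := by
    have h := congrArg (aeval α) hid
    rw [map_add, map_mul, hαg, mul_zero, map_pow, aeval_X, ← hz5, map_pow, map_pow, aeval_C] at h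
    have h2K : (2 : K) = 0 := by exact_mod_cast CharP.cast_eq_zero K 2
    linear_combination h - (φ z)^5 * h2K
  set u : K := α * (φ z)⁻¹ with hu
  have hu5 : u ^ 5 = 1 := by
    rw [hu, mul_pow, hα5, inv_pow, mul_inv_cancel₀ (pow_ne_zero _ hφz)]
  have hu0 : u ≠ 0 := fun h => one_ne_zero (α := K) (by rw [← hu5, h, zero_pow] ; norm_num)
  have hucard : u ^ (Fintype.card K - 1) = 1 := FiniteField.pow_card_sub_one_eq_one u hu0
  have hord : orderOf u = 1 := by
    have h5 : orderOf u ∣ 5 := orderOf_dvd_of_pow_eq_one hu5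
    have hc : orderOf u ∣ Fintype.card K - 1 := orderOf_dvd_of_pow_eq_one hucard
    rcases (Nat.Prime.eq_one_or_self_of_dvd (by norm_num) _ h5) with h | h
    · exact h
    · exact absurd (h ▸ hc) h5K
  have hu1 : u = 1 := orderOf_eq_one_iff.mp hord
  have hαz : α = φ z := (mul_inv_eq_one₀ hφz).mp hu1
  have : φ (g.eval z) = 0 := by
    rw [← aeval_algebraMap_apply_eq_algebraMap_eval, ← hαz, hαg]
  rw [hevalz] at this
  exact hφz (pow_eq_zero_iff (by norm_num) |>.mp ((map_pow φ z 4) ▸ this))
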